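/- arXiv:2508.06774 — 2 statements merged into one kernel-verified Lean document; each statement's English description precedes it below -/
import Mathlib

section
/- Let x₁,…,xₙ ∈ ℝ^d and ζ₁,…,ζₙ ∈ ℝ^{d'}, and set yᵢ = (xᵢ, ζᵢ) ∈ ℝ^{d+d'}. Let ε, M > 0 and let d_T : [n]×[n] → ℝ_{≥0} satisfy ‖ζᵢ − ζⱼ‖₁ ≤ ε·d_T(i,j) for all i, j. Let b ∈ ℝⁿ with Σᵢ bᵢ = 0, and suppose some feasible flow γ realizing EMD_X(b) (i.e., with Σᵢⱼ γᵢⱼ·‖xᵢ − xⱼ‖₁ = EMD_X(b)) satisfies Σᵢⱼ γᵢⱼ·d_T(i,j) ≤ M·EMD_X(b). Then EMD_X(b) ≤ EMD_Y(b) ≤ (1 + ε·M)·EMD_X(b), where EMD_X and EMD_Y denote the min-cost-flow values with edge costs ‖xᵢ − xⱼ‖₁ and ‖yᵢ − yⱼ‖₁ respectively. -/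
open Finset

/-- ℓ₁ distance on functions `ι → ℝ`. -/
noncomputable def l1dist {ι : Type} [Fintype ι] (u v : ι → ℝ) : ℝ := ∑ k, |u k - v k|

/-- Min-cost-flow Earth Mover's Distance of a vector `b` (with `∑ b = 0`) with respect to
the cost matrix `cost`. -/
noncomputable def EMDgen {ι : Type} [Fintype ι] (cost : ι → ι → ℝ) (b : ι → ℝ) : ℝ :=
  sInf { c : ℝ | ∃ γ : ι → ι → ℝ, (∀ i j, 0 ≤ γ i j) ∧
    (∀ i, ∑ j, γ i j = max (b i) 0) ∧ (∀ j, ∑ i, γ i j = max (-(b j)) 0) ∧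
    c = ∑ i, ∑ j, γ i j * cost i j }

lemma l1dist_nonneg {ι : Type} [Fintype ι] (u v : ι → ℝ) : 0 ≤ l1dist u v :=
  Finset.sum_nonneg fun _ _ => abs_nonneg _

lemma EMD_bddBelow {ι : Type} [Fintype ι] (cost : ι → ι → ℝ)
    (hc : ∀ i j, 0 ≤ cost i j) (b : ι → ℝ) :
    BddBelow { c : ℝ | ∃ γ : ι → ι → ℝ, (∀ i j, 0 ≤ γ i j) ∧
      (∀ i, ∑ j, γ i j = max (b i) 0) ∧ (∀ j, ∑ i, γ i j = max (-(b j)) 0) ∧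
      c = ∑ i, ∑ j, γ i j * cost i j } := by
  refine ⟨0, fun c hc' => ?_⟩
  obtain ⟨γ, h1, _, _, h4⟩ := hc'
  subst h4
  exact Finset.sum_nonneg fun i _ => Finset.sum_nonneg fun j _ =>
    mul_nonneg (h1 i j) (hc i j)

/-- if some optimal flow `γ` for `EMD_X(b)` satisfies
`∑ γᵢⱼ·d_T(i,j) ≤ M·EMD_X(b)`, and `‖ζᵢ − ζⱼ‖₁ ≤ ε·d_T(i,j)`, then for the concatenated
points `yᵢ = (xᵢ, ζᵢ)` one has `EMD_X(b) ≤ EMD_Y(b) ≤ (1 + ε·M)·EMD_X(b)`.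
(Here the `Y`-costs are `‖yᵢ − yⱼ‖₁ = ‖xᵢ − xⱼ‖₁ + ‖ζᵢ − ζⱼ‖₁`.) -/
theorem perturbed_emd {n d d' : ℕ} (x : Fin n → Fin d → ℝ) (ζ : Fin n → Fin d' → ℝ)
    (ε M : ℝ) (hε : 0 < ε) (hM : 0 < M)
    (dT : Fin n → Fin n → ℝ) (hdT : ∀ i j, 0 ≤ dT i j)
    (hζ : ∀ i j, l1dist (ζ i) (ζ j) ≤ ε * dT i j)
    (b : Fin n → ℝ) (hb : ∑ i, b i = 0)
    (γ : Fin n → Fin n → ℝ)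
    (hγnonneg : ∀ i j, 0 ≤ γ i j)
    (hγrow : ∀ i, ∑ j, γ i j = max (b i) 0)
    (hγcol : ∀ j, ∑ i, γ i j = max (-(b j)) 0)
    (hγopt : ∑ i, ∑ j, γ i j * l1dist (x i) (x j) =
      EMDgen (fun i j => l1dist (x i) (x j)) b)
    (hγT : ∑ i, ∑ j, γ i j * dT i j ≤ M * EMDgen (fun i j => l1dist (x i) (x j)) b) :
    EMDgen (fun i j => l1dist (x i) (x j)) b ≤
      EMDgen (fun i j => l1dist (x i) (x j) + l1dist (ζ i) (ζ j)) b ∧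
    EMDgen (fun i j => l1dist (x i) (x j) + l1dist (ζ i) (ζ j)) b ≤
      (1 + ε * M) * EMDgen (fun i j => l1dist (x i) (x j)) b := by
  set cX : Fin n → Fin n → ℝ := fun i j => l1dist (x i) (x j) with hcXdef
  set cY : Fin n → Fin n → ℝ := fun i j => l1dist (x i) (x j) + l1dist (ζ i) (ζ j)
    with hcYdef
  have hcX : ∀ i j, 0 ≤ cX i j := fun i j => l1dist_nonneg _ _
  have hcY : ∀ i j, 0 ≤ cY i j := fun i j =>
    add_nonneg (l1dist_nonneg _ _) (l1dist_nonneg _ _)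
  have hbX := EMD_bddBelow cX hcX b
  have hbY := EMD_bddBelow cY hcY b
  have hmemY : (∑ i, ∑ j, γ i j * cY i j) ∈ { c : ℝ | ∃ γ' : Fin n → Fin n → ℝ,
      (∀ i j, 0 ≤ γ' i j) ∧ (∀ i, ∑ j, γ' i j = max (b i) 0) ∧
      (∀ j, ∑ i, γ' i j = max (-(b j)) 0) ∧ c = ∑ i, ∑ j, γ' i j * cY i j } :=
    ⟨γ, hγnonneg, hγrow, hγcol, rfl⟩
  constructor
  · apply le_csInf ⟨_, hmemY⟩
    rintro c ⟨γ', h1, h2, h3, rfl⟩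
    calc EMDgen cX b ≤ ∑ i, ∑ j, γ' i j * cX i j :=
          csInf_le hbX ⟨γ', h1, h2, h3, rfl⟩
      _ ≤ ∑ i, ∑ j, γ' i j * cY i j := by
          refine Finset.sum_le_sum fun i _ => Finset.sum_le_sum fun j _ => ?_
          exact mul_le_mul_of_nonneg_left
            (le_add_of_nonneg_right (l1dist_nonneg _ _)) (h1 i j)
  · calc EMDgen cY b ≤ ∑ i, ∑ j, γ i j * cY i j := csInf_le hbY hmemY
      _ = (∑ i, ∑ j, γ i j * cX i j) + ∑ i, ∑ j, γ i j * l1dist (ζ i) (ζ j) := by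
          simp [hcYdef, hcXdef, mul_add, Finset.sum_add_distrib]
      _ ≤ EMDgen cX b + ε * ∑ i, ∑ j, γ i j * dT i j := by
          rw [hγopt]
          gcongr
          rw [Finset.mul_sum]
          refine Finset.sum_le_sum fun i _ => ?_
          rw [Finset.mul_sum]
          refine Finset.sum_le_sum fun j _ => ?_
          calc γ i j * l1dist (ζ i) (ζ j) ≤ γ i j * (ε * dT i j) :=
                mul_le_mul_of_nonneg_left (hζ i j) (hγnonneg i j)
            _ = ε * (γ i j * dT i j) := by ring
      _ ≤ EMDgen cX b + ε * (M * EMDgen cX b) := by gcongr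
      _ = (1 + ε * M) * EMDgen cX b := by ring
end

section
/- Let z ≥ 1 be real, let X and Y be finite sets, let L ⊆ X×Y with |L| ≤ 0.1·z², and let X' ⊆ X and Y' ⊆ Y be independent 1/z-subsamples. Then the number of vertices u ∈ X ∪ Y such that Pr[u is incident to some pair of L ∩ (X'×Y')] > 0.01/z is at most 20·z. (A vertex u ∈ X is incident to a pair (a,b) if u = a, and u ∈ Y is incident to (a,b) if u = b.) -/
open Finset

open Classical in
/-- The probability, over independent `1/z`-subsamples `X' ⊆ X` and `Y' ⊆ Y`
(each element kept independently with probability `1/z`), of the event `E X' Y'`. -/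
noncomputable def pairPr {α β : Type} [DecidableEq α] [DecidableEq β]
    (X : Finset α) (Y : Finset β) (z : ℝ) (E : Finset α → Finset β → Prop) : ℝ :=
  ∑ S ∈ X.powerset, ∑ T ∈ Y.powerset,
    ((1 / z) ^ S.card * (1 - 1 / z) ^ (X.card - S.card)) *
      ((1 / z) ^ T.card * (1 - 1 / z) ^ (Y.card - T.card)) *
      (if E S T then 1 else 0)

open Classical

lemma sum_w {α : Type} [DecidableEq α] (s : Finset α) (p q : ℝ) :
    ∑ S ∈ s.powerset, p ^ S.card * q ^ (s.card - S.card) = (p + q) ^ s.card := by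
  have h := Finset.prod_add (fun _ : α => p) (fun _ => q) s
  simp only [Finset.prod_const] at h
  rw [h]
  exact Finset.sum_congr rfl fun t ht => by
    rw [Finset.card_sdiff_of_subset (Finset.mem_powerset.mp ht)]

lemma sum_w_mem {α : Type} [DecidableEq α] (s : Finset α) (a : α) (ha : a ∈ s) (p q : ℝ) :
    ∑ S ∈ s.powerset, p ^ S.card * q ^ (s.card - S.card) * (if a ∈ S then 1 else 0)
      = p * (p + q) ^ (s.card - 1) := by
  classical
  have hs : s = insert a (s.erase a) := (Finset.insert_erase ha).symm
  have hna : a ∉ s.erase a := Finset.notMem_erase a s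
  have hcard : s.card = (s.erase a).card + 1 := (Finset.card_erase_add_one ha).symm
  calc ∑ S ∈ s.powerset, p ^ S.card * q ^ (s.card - S.card) * (if a ∈ S then 1 else 0)
      = ∑ S ∈ (insert a (s.erase a)).powerset,
          p ^ S.card * q ^ (s.card - S.card) * (if a ∈ S then 1 else 0) := by rw [← hs]
    _ = (∑ S ∈ (s.erase a).powerset,
          p ^ S.card * q ^ (s.card - S.card) * (if a ∈ S then 1 else 0))
        + ∑ S ∈ (s.erase a).powerset,
          p ^ (insert a S).card * q ^ (s.card - (insert a S).card)
            * (if a ∈ insert a S then 1 else 0) := by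
        rw [Finset.sum_powerset_insert hna]
    _ = 0 + ∑ S ∈ (s.erase a).powerset,
          p * (p ^ S.card * q ^ ((s.erase a).card - S.card)) := by
        congr 1
        · apply Finset.sum_eq_zero
          intro S hS
          have : a ∉ S := fun h => hna (Finset.mem_powerset.mp hS h)
          simp [this]
        · apply Finset.sum_congr rfl
          intro S hS
          have hns : a ∉ S := fun h => hna (Finset.mem_powerset.mp hS h)
          rw [Finset.card_insert_of_notMem hns]
          have : s.card - (S.card + 1) = (s.erase a).card - S.card := by omega
          rw [this]
          simp [Finset.mem_insert]
          ring
    _ = p * (p + q) ^ ((s.erase a).card) := by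
        rw [zero_add, ← Finset.mul_sum, sum_w]
    _ = p * (p + q) ^ (s.card - 1) := by rw [hcard]; norm_num

lemma w_nonneg {γ : Type} [DecidableEq γ] (s : Finset γ) (S : Finset γ) {z : ℝ} (hz : 1 ≤ z) :
    (0:ℝ) ≤ (1 / z) ^ S.card * (1 - 1 / z) ^ (s.card - S.card) := by
  have hz0 : (0:ℝ) < z := lt_of_lt_of_le one_pos hz
  have h1 : (0:ℝ) ≤ 1 / z := by positivity
  have h2 : (0:ℝ) ≤ 1 - 1 / z := by
    rw [sub_nonneg]
    exact (div_le_one hz0).mpr hz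
  positivity

lemma pairPr_pair {α β : Type} [DecidableEq α] [DecidableEq β]
    (X : Finset α) (Y : Finset β) {z : ℝ} (hz : 1 ≤ z) (a : α) (b : β)
    (ha : a ∈ X) (hb : b ∈ Y) :
    pairPr X Y z (fun S T => a ∈ S ∧ b ∈ T) = (1/z) * (1/z) := by
  have hz0 : z ≠ 0 := by positivity
  have hpq : (1/z) + (1 - 1/z) = 1 := by ring
  calc pairPr X Y z (fun S T => a ∈ S ∧ b ∈ T)
      = ∑ S ∈ X.powerset, ∑ T ∈ Y.powerset,
          (((1 / z) ^ S.card * (1 - 1 / z) ^ (X.card - S.card)) * (if a ∈ S then 1 else 0)) *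
            (((1 / z) ^ T.card * (1 - 1 / z) ^ (Y.card - T.card)) * (if b ∈ T then 1 else 0)) := by
        unfold pairPr
        apply Finset.sum_congr rfl; intro S _; apply Finset.sum_congr rfl; intro T _
        by_cases h1 : a ∈ S <;> by_cases h2 : b ∈ T
        · rw [if_pos (show a ∈ S ∧ b ∈ T from ⟨h1, h2⟩), if_pos h1, if_pos h2]; ring
        · rw [if_neg (show ¬(a ∈ S ∧ b ∈ T) from fun h => h2 h.2), if_neg h2]; ring
        · rw [if_neg (show ¬(a ∈ S ∧ b ∈ T) from fun h => h1 h.1), if_neg h1]; ring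
        · rw [if_neg (show ¬(a ∈ S ∧ b ∈ T) from fun h => h1 h.1), if_neg h1]; ring
    _ = (∑ S ∈ X.powerset,
          ((1 / z) ^ S.card * (1 - 1 / z) ^ (X.card - S.card)) * (if a ∈ S then 1 else 0)) *
        (∑ T ∈ Y.powerset,
          ((1 / z) ^ T.card * (1 - 1 / z) ^ (Y.card - T.card)) * (if b ∈ T then 1 else 0)) := by
        rw [Finset.sum_mul_sum]
    _ = (1/z) * (1/z) := by
        rw [sum_w_mem X a ha, sum_w_mem Y b hb, hpq, one_pow, one_pow]; ring

lemma pairPr_le_sum {α β : Type} [DecidableEq α] [DecidableEq β]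
    (X : Finset α) (Y : Finset β) {z : ℝ} (hz : 1 ≤ z)
    {γ : Type} (F : Finset γ) (Q : γ → Finset α → Finset β → Prop)
    (E : Finset α → Finset β → Prop)
    (hE : ∀ S T, E S T → ∃ p ∈ F, Q p S T) :
    pairPr X Y z E ≤ ∑ p ∈ F, pairPr X Y z (Q p) := by
  unfold pairPr
  have hswap : (∑ p ∈ F, ∑ S ∈ X.powerset, ∑ T ∈ Y.powerset,
        ((1 / z) ^ S.card * (1 - 1 / z) ^ (X.card - S.card)) *
          ((1 / z) ^ T.card * (1 - 1 / z) ^ (Y.card - T.card)) *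
          (if Q p S T then 1 else 0))
      = ∑ S ∈ X.powerset, ∑ T ∈ Y.powerset, ∑ p ∈ F,
        ((1 / z) ^ S.card * (1 - 1 / z) ^ (X.card - S.card)) *
          ((1 / z) ^ T.card * (1 - 1 / z) ^ (Y.card - T.card)) *
          (if Q p S T then 1 else 0) := by
    rw [Finset.sum_comm]
    exact Finset.sum_congr rfl fun S _ => Finset.sum_comm
  rw [hswap]
  apply Finset.sum_le_sum
  intro S _
  apply Finset.sum_le_sum
  intro T _
  set w : ℝ := ((1 / z) ^ S.card * (1 - 1 / z) ^ (X.card - S.card)) *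
      ((1 / z) ^ T.card * (1 - 1 / z) ^ (Y.card - T.card)) with hw
  have hw0 : 0 ≤ w := mul_nonneg (w_nonneg X S hz) (w_nonneg Y T hz)
  by_cases hEST : E S T
  · obtain ⟨p₀, hp₀F, hp₀⟩ := hE S T hEST
    have h1 : w * (if E S T then (1:ℝ) else 0) = w := by simp [hEST]
    rw [h1]
    calc w = w * (if Q p₀ S T then (1:ℝ) else 0) := by simp [hp₀]
      _ ≤ ∑ p ∈ F, w * (if Q p S T then (1:ℝ) else 0) := by
          apply Finset.single_le_sum (f := fun p => w * (if Q p S T then (1:ℝ) else 0)) _ hp₀F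
          intro p _
          by_cases h : Q p S T <;> simp [h, hw0]
  · simp only [hEST, if_false, mul_zero]
    apply Finset.sum_nonneg
    intro p _
    by_cases h : Q p S T <;> simp [h, hw0]

lemma side_bound {α β : Type} [DecidableEq α] [DecidableEq β]
    {z : ℝ} (hz : 1 ≤ z) (X : Finset α) (Y : Finset β) (L : Finset (α × β)) (hL : L ⊆ X ×ˢ Y)
    (hcard : (L.card : ℝ) ≤ 0.1 * z ^ 2)
    (A : Finset α) (hA : A ⊆ X)
    (hdegA : ∀ x ∈ A,
      0.01 / z < pairPr X Y z fun S T => ∃ p ∈ L, p.1 = x ∧ p.1 ∈ S ∧ p.2 ∈ T) :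
    (A.card : ℝ) ≤ 10 * z := by
  have hz0 : (0:ℝ) < z := lt_of_lt_of_le one_pos hz
  have hzne : z ≠ 0 := ne_of_gt hz0
  -- each x ∈ A has degree > 0.01 z
  have hdeg : ∀ x ∈ A, (0.01 : ℝ) * z ≤ ((L.filter fun p => p.1 = x).card : ℝ) := by
    intro x hx
    set F := L.filter fun p => p.1 = x with hF
    have hbound : pairPr X Y z (fun S T => ∃ p ∈ L, p.1 = x ∧ p.1 ∈ S ∧ p.2 ∈ T)
        ≤ ∑ p ∈ F, pairPr X Y z (fun S T => p.1 ∈ S ∧ p.2 ∈ T) := by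
      apply pairPr_le_sum X Y hz
      rintro S T ⟨p, hpL, hpx, hpS, hpT⟩
      exact ⟨p, Finset.mem_filter.mpr ⟨hpL, hpx⟩, hpS, hpT⟩
    have heval : ∑ p ∈ F, pairPr X Y z (fun S T => p.1 ∈ S ∧ p.2 ∈ T)
        = (F.card : ℝ) * (1/z * (1/z)) := by
      rw [Finset.sum_congr rfl (fun p hp => ?_), Finset.sum_const, nsmul_eq_mul]
      have hpL : p ∈ L := (Finset.mem_filter.mp hp).1
      have hpXY := Finset.mem_product.mp (hL hpL)
      exact pairPr_pair X Y hz p.1 p.2 hpXY.1 hpXY.2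
    have h1 : 0.01 / z < (F.card : ℝ) * (1/z * (1/z)) := by
      calc (0.01:ℝ)/z < _ := hdegA x hx
        _ ≤ _ := hbound
        _ = _ := heval
    have h2 : 0.01 / z * (z * z) < (F.card : ℝ) * (1/z * (1/z)) * (z * z) :=
      mul_lt_mul_of_pos_right h1 (by positivity)
    have e1 : (0.01:ℝ) / z * (z * z) = 0.01 * z := by field_simp
    have e2 : (F.card : ℝ) * (1/z * (1/z)) * (z * z) = F.card := by field_simp
    rw [e1, e2] at h2
    exact le_of_lt h2
  -- sum of degrees over A is at most |L|
  have hfib : ∑ x ∈ A, ((L.filter fun p => p.1 = x).card) = (L.filter fun p => p.1 ∈ A).card := by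
    rw [Finset.card_eq_sum_card_fiberwise
      (s := L.filter fun p => p.1 ∈ A) (f := Prod.fst) (t := A) (fun p hp => (Finset.mem_filter.mp hp).2)]
    apply Finset.sum_congr rfl
    intro x hx
    congr 1
    rw [Finset.filter_filter]
    apply Finset.filter_congr
    intro p _
    constructor
    · exact fun h => ⟨h ▸ hx, h⟩
    · exact fun h => h.2
  have hsum : (A.card : ℝ) * (0.01 * z) ≤ (L.card : ℝ) := by
    have h3 : A.card • ((0.01:ℝ) * z) ≤ ∑ x ∈ A, ((L.filter fun p => p.1 = x).card : ℝ) :=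
      Finset.card_nsmul_le_sum A _ _ hdeg
    rw [nsmul_eq_mul] at h3
    have h4 : (∑ x ∈ A, ((L.filter fun p => p.1 = x).card : ℝ)) = ((L.filter fun p => p.1 ∈ A).card : ℝ) := by
      rw [← Nat.cast_sum, hfib]
    have h5 : ((L.filter fun p => p.1 ∈ A).card : ℝ) ≤ (L.card : ℝ) := by
      exact_mod_cast Nat.cast_le.mpr (Finset.card_filter_le _ _)
    linarith
  nlinarith [hsum, hcard, hz0]

lemma side_bound_Y {α β : Type} [DecidableEq α] [DecidableEq β]
    {z : ℝ} (hz : 1 ≤ z) (X : Finset α) (Y : Finset β) (L : Finset (α × β)) (hL : L ⊆ X ×ˢ Y)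
    (hcard : (L.card : ℝ) ≤ 0.1 * z ^ 2)
    (B : Finset β)
    (hdegB : ∀ y ∈ B,
      0.01 / z < pairPr X Y z fun S T => ∃ p ∈ L, p.2 = y ∧ p.1 ∈ S ∧ p.2 ∈ T) :
    (B.card : ℝ) ≤ 10 * z := by
  have hz0 : (0:ℝ) < z := lt_of_lt_of_le one_pos hz
  have hzne : z ≠ 0 := ne_of_gt hz0
  have hdeg : ∀ y ∈ B, (0.01 : ℝ) * z ≤ ((L.filter fun p => p.2 = y).card : ℝ) := by
    intro y hy
    set F := L.filter fun p => p.2 = y with hF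
    have hbound : pairPr X Y z (fun S T => ∃ p ∈ L, p.2 = y ∧ p.1 ∈ S ∧ p.2 ∈ T)
        ≤ ∑ p ∈ F, pairPr X Y z (fun S T => p.1 ∈ S ∧ p.2 ∈ T) := by
      apply pairPr_le_sum X Y hz
      rintro S T ⟨p, hpL, hpy, hpS, hpT⟩
      exact ⟨p, Finset.mem_filter.mpr ⟨hpL, hpy⟩, hpS, hpT⟩
    have heval : ∑ p ∈ F, pairPr X Y z (fun S T => p.1 ∈ S ∧ p.2 ∈ T)
        = (F.card : ℝ) * (1/z * (1/z)) := by
      rw [Finset.sum_congr rfl (fun p hp => ?_), Finset.sum_const, nsmul_eq_mul]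
      have hpL : p ∈ L := (Finset.mem_filter.mp hp).1
      have hpXY := Finset.mem_product.mp (hL hpL)
      exact pairPr_pair X Y hz p.1 p.2 hpXY.1 hpXY.2
    have h1 : 0.01 / z < (F.card : ℝ) * (1/z * (1/z)) := by
      calc (0.01:ℝ)/z < _ := hdegB y hy
        _ ≤ _ := hbound
        _ = _ := heval
    have h2 : 0.01 / z * (z * z) < (F.card : ℝ) * (1/z * (1/z)) * (z * z) :=
      mul_lt_mul_of_pos_right h1 (by positivity)
    have e1 : (0.01:ℝ) / z * (z * z) = 0.01 * z := by field_simp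
    have e2 : (F.card : ℝ) * (1/z * (1/z)) * (z * z) = F.card := by field_simp
    rw [e1, e2] at h2
    exact le_of_lt h2
  have hfib : ∑ y ∈ B, ((L.filter fun p => p.2 = y).card) = (L.filter fun p => p.2 ∈ B).card := by
    rw [Finset.card_eq_sum_card_fiberwise
      (s := L.filter fun p => p.2 ∈ B) (f := Prod.snd) (t := B) (fun p hp => (Finset.mem_filter.mp hp).2)]
    apply Finset.sum_congr rfl
    intro y hy
    congr 1
    rw [Finset.filter_filter]
    apply Finset.filter_congr
    intro p _
    constructor
    · exact fun h => ⟨h ▸ hy, h⟩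
    · exact fun h => h.2
  have hsum : (B.card : ℝ) * (0.01 * z) ≤ (L.card : ℝ) := by
    have h3 : B.card • ((0.01:ℝ) * z) ≤ ∑ y ∈ B, ((L.filter fun p => p.2 = y).card : ℝ) :=
      Finset.card_nsmul_le_sum B _ _ hdeg
    rw [nsmul_eq_mul] at h3
    have h4 : (∑ y ∈ B, ((L.filter fun p => p.2 = y).card : ℝ)) = ((L.filter fun p => p.2 ∈ B).card : ℝ) := by
      rw [← Nat.cast_sum, hfib]
    have h5 : ((L.filter fun p => p.2 ∈ B).card : ℝ) ≤ (L.card : ℝ) := by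
      exact_mod_cast Nat.cast_le.mpr (Finset.card_filter_le _ _)
    linarith
  nlinarith [hsum, hcard, hz0]

open Classical in
/-- at most `20·z` vertices of `X ∪ Y` are incident to a surviving pair of
`L ∩ (X' × Y')` with probability greater than `0.01/z`. -/
theorem few_frequent_vertices (z : ℝ) (hz : 1 ≤ z)
    (α β : Type) [DecidableEq α] [DecidableEq β]
    (X : Finset α) (Y : Finset β) (L : Finset (α × β)) (hL : L ⊆ X ×ˢ Y)
    (hcard : (L.card : ℝ) ≤ 0.1 * z ^ 2) :
    (((X.filter fun x =>
          0.01 / z < pairPr X Y z fun S T => ∃ p ∈ L, p.1 = x ∧ p.1 ∈ S ∧ p.2 ∈ T).card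
      + (Y.filter fun y =>
          0.01 / z < pairPr X Y z fun S T => ∃ p ∈ L, p.2 = y ∧ p.1 ∈ S ∧ p.2 ∈ T).card
      : ℕ) : ℝ) ≤ 20 * z := by
  have hA := side_bound hz X Y L hL hcard
    (X.filter fun x =>
      0.01 / z < pairPr X Y z fun S T => ∃ p ∈ L, p.1 = x ∧ p.1 ∈ S ∧ p.2 ∈ T)
    (Finset.filter_subset _ _)
    (fun x hx => (Finset.mem_filter.mp hx).2)
  have hB := side_bound_Y hz X Y L hL hcard
    (Y.filter fun y =>
      0.01 / z < pairPr X Y z fun S T => ∃ p ∈ L, p.2 = y ∧ p.1 ∈ S ∧ p.2 ∈ T)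
    (fun y hy => (Finset.mem_filter.mp hy).2)
  push_cast
  linarith
end
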